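/- Let λ ∈ [0,1), let W be a propagation matrix, and let Ψ^{(∞)} be a fixed point of the basic cooperative optimization update T_λ. If x̃ is a configuration such that, for every i ∈ {1,…,n}, x̃ globally minimizes the function x ↦ (1−λ) E_i(x) + λ ∑_{j=1}^n w_{ij} Ψ^{(∞)}_j(x_j) over all configurations, then E(x̃) = ∑_{i=1}^n Ψ^{(∞)}_i(x̃_i), i.e., the objective value at the consensus solution equals the value of the equilibrium lower bound function there. -/

import Mathlib

open Finset Filter Topology

/-- A propagation matrix: nonnegative entries with unit column sums. -/
def IsPropagationMatrix {n : ℕ} (W : Fin n → Fin n → ℝ) : Prop :=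
  (∀ i j, 0 ≤ W i j) ∧ ∀ j, ∑ i, W i j = 1

/-- The basic cooperative optimization update `T_λ`:
`T_λ(Ψ)_i(a) = min_{x : x_i = a} ((1−λ) E_i(x) + λ ∑_j w_{ij} Ψ_j(x_j))`. -/
noncomputable def coopT {n : ℕ} {D : Fin n → Type} [∀ i, Fintype (D i)]
    [∀ i, Nonempty (D i)]
    (E : Fin n → ((i : Fin n) → D i) → ℝ) (W : Fin n → Fin n → ℝ) (lam : ℝ)
    (Ψ : (i : Fin n) → D i → ℝ) : (i : Fin n) → D i → ℝ :=
  fun i a =>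
    Finset.univ.inf' Finset.univ_nonempty
      (fun x : (j : Fin n) → D j =>
        (1 - lam) * E i (Function.update x i a) +
          lam * ∑ j, W i j * Ψ j (Function.update x i a j))

/-- The total objective `E(x) = ∑ i, E_i(x)`. -/
def objective {n : ℕ} {D : Fin n → Type}
    (E : Fin n → ((i : Fin n) → D i) → ℝ) (x : (i : Fin n) → D i) : ℝ :=
  ∑ i, E i x

/-- `x̃` is a consensus solution with respect to the state `Ψ` and cooperation strength
`lam`: for every `i`, `x̃` globally minimizes the modified sub-objective
`x ↦ (1−λ) E_i(x) + λ ∑_j w_{ij} Ψ_j(x_j)`. -/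
def IsConsensusState {n : ℕ} {D : Fin n → Type}
    (E : Fin n → ((i : Fin n) → D i) → ℝ) (W : Fin n → Fin n → ℝ) (lam : ℝ)
    (Ψ : (i : Fin n) → D i → ℝ) (xt : (i : Fin n) → D i) : Prop :=
  ∀ i, ∀ x : (j : Fin n) → D j,
    (1 - lam) * E i xt + lam * ∑ j, W i j * Ψ j (xt j)
      ≤ (1 - lam) * E i x + lam * ∑ j, W i j * Ψ j (x j)

/-- At a fixed point `Ψ^{(∞)}` of `T_λ`, the objective value at a
consensus solution equals the value of the equilibrium lower bound function there:
`E(x̃) = ∑_i Ψ^{(∞)}_i(x̃_i)`. -/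
theorem consensus_touches_lower_bound (n : ℕ) (hn : 1 ≤ n) (D : Fin n → Type)
    [∀ i, Fintype (D i)] [∀ i, Nonempty (D i)]
    (E : Fin n → ((i : Fin n) → D i) → ℝ) (W : Fin n → Fin n → ℝ)
    (hW : IsPropagationMatrix W) (lam : ℝ) (hlam0 : 0 ≤ lam) (hlam1 : lam < 1)
    (Ψinf : (i : Fin n) → D i → ℝ) (hfix : coopT E W lam Ψinf = Ψinf)
    (xt : (i : Fin n) → D i) (hcons : IsConsensusState E W lam Ψinf xt) :
    objective E xt = ∑ i, Ψinf i (xt i) := by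
  have key : ∀ i, Ψinf i (xt i)
      = (1 - lam) * E i xt + lam * ∑ j, W i j * Ψinf j (xt j) := by
    intro i
    have h1 : coopT E W lam Ψinf i (xt i) = Ψinf i (xt i) := by rw [hfix]
    rw [← h1, coopT]
    apply le_antisymm
    · have := Finset.inf'_le         (f := fun x : (j : Fin n) → D j =>
          (1 - lam) * E i (Function.update x i (xt i)) +
            lam * ∑ j, W i j * Ψinf j (Function.update x i (xt i) j))
        (Finset.mem_univ xt)
      refine le_trans this (le_of_eq ?_)
      simp [Function.update_eq_self]
    · apply Finset.le_inf'
      intro x _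
      simpa using hcons i (Function.update x i (xt i))
  have hsum : ∑ i, Ψinf i (xt i)
      = (1 - lam) * objective E xt + lam * ∑ j, Ψinf j (xt j) := by
    calc ∑ i, Ψinf i (xt i)
        = ∑ i, ((1 - lam) * E i xt + lam * ∑ j, W i j * Ψinf j (xt j)) := by
          exact Finset.sum_congr rfl fun i _ => key i
      _ = (1 - lam) * objective E xt
          + lam * ∑ i, ∑ j, W i j * Ψinf j (xt j) := by
          rw [Finset.sum_add_distrib, ← Finset.mul_sum, ← Finset.mul_sum]
          rfl
      _ = (1 - lam) * objective E xt + lam * ∑ j, Ψinf j (xt j) := by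
          congr 1
          congr 1
          rw [Finset.sum_comm]
          exact Finset.sum_congr rfl fun j _ => by
            rw [← Finset.sum_mul, hW.2 j, one_mul]
  have h1 : (1 - lam) ≠ 0 := by linarith
  have : (1 - lam) * ∑ i, Ψinf i (xt i) = (1 - lam) * objective E xt := by
    linarith [hsum]
  exact (mul_left_cancel₀ h1 this).symm
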